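/- Suppose an algebra A has Gumm operations p, j_1, ..., j_{n+1}. Then for every q ≥ 2 and all congruences α, β, γ of A, A is (2^q − 1, (2^{q+1} − 2q − 2)n + 2)-modular: α ∩ (β ∘ (α∩γ) ∘ β ∘ ⋯ ∘ β) with 2^q − 1 alternating factors is contained in (α∩β) ∘ (α∩γ) ∘ ⋯ with (2^{q+1} − 2q − 2)n + 2 alternating factors. -/

import Mathlib

/-- Relational composition: `rcomp R S a c ↔ ∃ b, R a b ∧ S b c`. -/
def rcomp {A : Type*} (R S : A → A → Prop) : A → A → Prop := fun a c => ∃ b, R a b ∧ S b c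

/-- Converse of a relation. -/
def rconv {A : Type*} (R : A → A → Prop) : A → A → Prop := fun a b => R b a

/-- Intersection of relations. -/
def rinter {A : Type*} (R S : A → A → Prop) : A → A → Prop := fun a b => R a b ∧ S a b

/-- Inclusion of relations. -/
def rsub {A : Type*} (R S : A → A → Prop) : Prop := ∀ a b, R a b → S a b

/-- Alternating composition with `m` factors, starting with `R`:
`altn R S m = R ∘ S ∘ R ∘ ⋯` (`m` factors, `m-1` occurrences of `∘`). -/
def altn {A : Type*} : (A → A → Prop) → (A → A → Prop) → ℕ → A → A → Prop
  | _, _, 0 => Eq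
  | R, S, m + 1 => rcomp R (altn S R m)

/-- Composition `T i ∘ T (i+1) ∘ ⋯ ∘ T (i+m-1)` of `m` relations starting at index `i`. -/
def chainFrom {A : Type*} (T : ℕ → A → A → Prop) : ℕ → ℕ → A → A → Prop
  | _, 0 => Eq
  | i, m + 1 => rcomp (T i) (chainFrom T (i + 1) m)

/-- The nested expression `A_ℓ`: `nest α β γ 1 = α∩(β ∘ (α∩γ) ∘ β)`, and
`nest α β γ (ℓ+1) = α∩(β ∘ (α ∩ nest α γ β ℓ) ∘ β)` (the inner one swaps `β` and `γ`). -/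
def nest {A : Type*} : (A → A → Prop) → (A → A → Prop) → (A → A → Prop) → ℕ → A → A → Prop
  | _, _, γ, 0 => γ
  | α, β, γ, ℓ + 1 => rinter α (rcomp β (rcomp (rinter α (nest α γ β ℓ)) β))

/-- A ternary operation preserves a relation. -/
def pres3 {A : Type*} (f : A → A → A → A) (R : A → A → Prop) : Prop :=
  ∀ a₁ a₂ a₃ b₁ b₂ b₃, R a₁ b₁ → R a₂ b₂ → R a₃ b₃ → R (f a₁ a₂ a₃) (f b₁ b₂ b₃)

/-- A quaternary operation preserves a relation. -/
def pres4 {A : Type*} (f : A → A → A → A → A) (R : A → A → Prop) : Prop :=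
  ∀ a₁ a₂ a₃ a₄ b₁ b₂ b₃ b₄, R a₁ b₁ → R a₂ b₂ → R a₃ b₃ → R a₄ b₄ →
    R (f a₁ a₂ a₃ a₄) (f b₁ b₂ b₃ b₄)

/-- Day equations for quaternary operations `d 0, …, d k`. -/
def DayEqs {A : Type*} (k : ℕ) (d : ℕ → A → A → A → A → A) : Prop :=
  (∀ i, i ≤ k → ∀ x y, d i x y y x = x) ∧
  (∀ x y z w, d 0 x y z w = x) ∧
  (∀ i, i < k → i % 2 = 0 → ∀ x w, d i x x w w = d (i + 1) x x w w) ∧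
  (∀ i, i < k → i % 2 = 1 → ∀ x y w, d i x y y w = d (i + 1) x y y w) ∧
  (∀ x y z w, d k x y z w = w)

/-- Jónsson equations for ternary operations `j 0, …, j (n+1)` witnessing `n+1`-distributivity. -/
def JonssonEqs {A : Type*} (n : ℕ) (j : ℕ → A → A → A → A) : Prop :=
  (∀ i, i ≤ n + 1 → ∀ x y, j i x y x = x) ∧
  (∀ x y z, j 0 x y z = x) ∧
  (∀ i, i ≤ n → i % 2 = 1 → ∀ x z, j i x z z = j (i + 1) x z z) ∧
  (∀ i, i ≤ n → i % 2 = 0 → ∀ x z, j i x x z = j (i + 1) x x z) ∧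
  (∀ x y z, j (n + 1) x y z = z)

/-- Gumm equations for ternary operations `p, j 1, …, j (n+1)`. -/
def GummEqs {A : Type*} (n : ℕ) (p : A → A → A → A) (j : ℕ → A → A → A → A) : Prop :=
  (∀ i, 1 ≤ i → i ≤ n + 1 → ∀ x y, j i x y x = x) ∧
  (∀ x z, p x z z = x) ∧
  (∀ x z, p x x z = j 1 x x z) ∧
  (∀ i, 1 ≤ i → i ≤ n → i % 2 = 1 → ∀ x z, j i x z z = j (i + 1) x z z) ∧
  (∀ i, 1 ≤ i → i ≤ n → i % 2 = 0 → ∀ x z, j i x x z = j (i + 1) x x z) ∧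
  (∀ x y z, j (n + 1) x y z = z)

/-- Defective Gumm equations: all Gumm equations except that `j n (x,y,x) = x` is not assumed. -/
def DefGummEqs {A : Type*} (n : ℕ) (p : A → A → A → A) (j : ℕ → A → A → A → A) : Prop :=
  (∀ i, 1 ≤ i → i ≤ n + 1 → i ≠ n → ∀ x y, j i x y x = x) ∧
  (∀ x z, p x z z = x) ∧
  (∀ x z, p x x z = j 1 x x z) ∧
  (∀ i, 1 ≤ i → i ≤ n → i % 2 = 1 → ∀ x z, j i x z z = j (i + 1) x z z) ∧
  (∀ i, 1 ≤ i → i ≤ n → i % 2 = 0 → ∀ x z, j i x x z = j (i + 1) x x z) ∧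
  (∀ x y z, j (n + 1) x y z = z)

section AuxAltn

variable {A : Type*}

theorem altn_zero' {R S : A → A → Prop} {a b : A} (h : altn R S 0 a b) : a = b := h

theorem altn_one' {R S : A → A → Prop} {a b : A} (h : altn R S 1 a b) : R a b := by
  obtain ⟨x, hx, he⟩ := h
  have : x = b := he
  subst this; exact hx

theorem altn_snoc : ∀ (t : ℕ) (R S : A → A → Prop) (a b c : A),
    altn R S t a b → (t % 2 = 0 → R b c) → (t % 2 = 1 → S b c) → altn R S (t + 1) a c := by
  intro t
  induction t with
  | zero =>
      intro R S a b c h h0 _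
      have : a = b := h
      subst this
      exact ⟨c, h0 rfl, rfl⟩
  | succ t ih =>
      intro R S a b c h h0 h1
      obtain ⟨x, hax, hxb⟩ := h
      exact ⟨x, hax, ih S R x b c hxb (fun ht => h1 (by omega)) (fun ht => h0 (by omega))⟩

theorem altn_rev : ∀ (t : ℕ) (R S : A → A → Prop),
    (∀ x y, R x y → R y x) → (∀ x y, S x y → S y x) →
    ∀ a b, altn R S t a b →
    (t % 2 = 0 → altn S R t b a) ∧ (t % 2 = 1 → altn R S t b a) := by
  intro t
  induction t with
  | zero =>
      intro R S _ _ a b h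
      have : a = b := h
      subst this
      exact ⟨fun _ => rfl, fun h => by omega⟩
  | succ t ih =>
      intro R S hR hS a b h
      obtain ⟨x, hax, hxb⟩ := h
      have IH := ih S R hS hR x b hxb
      constructor
      · intro hp
        have ht : t % 2 = 1 := by omega
        exact altn_snoc t S R b x a (IH.2 ht) (fun h => by omega) (fun _ => hR _ _ hax)
      · intro hp
        have ht : t % 2 = 0 := by omega
        exact altn_snoc t R S b x a (IH.1 ht) (fun _ => hR _ _ hax) (fun h => by omega)

theorem altn_merge : ∀ (t : ℕ) (R S : A → A → Prop),
    (∀ x y z, R x y → R y z → R x z) → (∀ x y z, S x y → S y z → S x z) →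
    ∀ a b c, altn R S (t + 1) a b →
    ((t + 1) % 2 = 1 → R b c) → ((t + 1) % 2 = 0 → S b c) → altn R S (t + 1) a c := by
  intro t
  induction t with
  | zero =>
      intro R S hRt _ a b c h h1 _
      have hab : R a b := altn_one' h
      exact ⟨c, hRt _ _ _ hab (h1 rfl), rfl⟩
  | succ t ih =>
      intro R S hRt hSt a b c h h1 h0
      obtain ⟨x, hax, hxb⟩ := h
      exact ⟨x, hax, ih S R hSt hRt x b c hxb (fun hp => h0 (by omega)) (fun hp => h1 (by omega))⟩

theorem altn_append : ∀ (jj : ℕ) (R S : A → A → Prop) (k : ℕ) (a b c : A),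
    altn R S jj a b → (jj % 2 = 0 → altn R S k b c) → (jj % 2 = 1 → altn S R k b c) →
    altn R S (jj + k) a c := by
  intro jj
  induction jj with
  | zero =>
      intro R S k a b c h h0 _
      have : a = b := h
      subst this
      simpa using h0 rfl
  | succ jj ih =>
      intro R S k a b c h h0 h1
      obtain ⟨x, hax, hxb⟩ := h
      have hrest : altn S R (jj + k) x c :=
        ih S R k x b c hxb (fun hp => h1 (by omega)) (fun hp => h0 (by omega))
      have e : jj + 1 + k = (jj + k) + 1 := by omega
      rw [e]
      exact ⟨x, hax, hrest⟩

theorem altn_split : ∀ (jj : ℕ) (R S : A → A → Prop) (k : ℕ) (a c : A),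
    altn R S (jj + k) a c →
    ∃ b, altn R S jj a b ∧ (jj % 2 = 0 → altn R S k b c) ∧ (jj % 2 = 1 → altn S R k b c) := by
  intro jj
  induction jj with
  | zero =>
      intro R S k a c h
      exact ⟨a, rfl, fun _ => by simpa using h, fun h1 => by omega⟩
  | succ jj ih =>
      intro R S k a c h
      have e : jj + 1 + k = (jj + k) + 1 := by omega
      rw [e] at h
      obtain ⟨x, hax, hxc⟩ := h
      obtain ⟨b, hb1, hb2, hb3⟩ := ih S R k x c hxc
      exact ⟨b, ⟨x, hax, hb1⟩, fun hp => hb3 (by omega), fun hp => hb2 (by omega)⟩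

theorem altn_map : ∀ (t : ℕ) (R S R' S' : A → A → Prop) (g : A → A),
    (∀ x y, R x y → R' (g x) (g y)) → (∀ x y, S x y → S' (g x) (g y)) →
    ∀ a b, altn R S t a b → altn R' S' t (g a) (g b) := by
  intro t
  induction t with
  | zero =>
      intro R S R' S' g _ _ a b h
      have : a = b := h
      subst this; rfl
  | succ t ih =>
      intro R S R' S' g hR hS a b h
      obtain ⟨x, hax, hxb⟩ := h
      exact ⟨g x, hR _ _ hax, ih S R S' R' g hS hR x b hxb⟩

theorem altn_zip : ∀ (t : ℕ) (R S R' S' : A → A → Prop) (f : A → A → A),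
    (∀ x y u v, R x y → R u v → R' (f x u) (f y v)) →
    (∀ x y u v, S x y → S u v → S' (f x u) (f y v)) →
    ∀ a b u v, altn R S t a b → altn R S t u v → altn R' S' t (f a u) (f b v) := by
  intro t
  induction t with
  | zero =>
      intro R S R' S' f _ _ a b u v h1 h2
      have e1 : a = b := h1
      have e2 : u = v := h2
      subst e1; subst e2; rfl
  | succ t ih =>
      intro R S R' S' f hR hS a b u v h1 h2
      obtain ⟨x, hax, hxb⟩ := h1
      obtain ⟨y, huy, hyv⟩ := h2
      exact ⟨f x y, hR _ _ _ _ hax huy, ih S R S' R' f hS hR x b y v hxb hyv⟩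

end AuxAltn

/-- an algebra with Gumm operations is
`(2^q − 1, (2^{q+1} − 2q − 2)n + 2)`-modular for every `q ≥ 2`. -/
theorem stmt11 {A : Type*} (n : ℕ) (p : A → A → A → A) (j : ℕ → A → A → A → A)
    (hg : GummEqs n p j)
    (α β γ : A → A → Prop)
    (hα : Equivalence α) (hβ : Equivalence β) (hγ : Equivalence γ)
    (hpα : pres3 p α) (hjα : ∀ i, 1 ≤ i → i ≤ n + 1 → pres3 (j i) α)
    (hpβ : pres3 p β) (hjβ : ∀ i, 1 ≤ i → i ≤ n + 1 → pres3 (j i) β)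
    (hpγ : pres3 p γ) (hjγ : ∀ i, 1 ≤ i → i ≤ n + 1 → pres3 (j i) γ)
    (q : ℕ) (hq : 2 ≤ q) :
    rsub (rinter α (altn β (rinter α γ) (2 ^ q - 1)))
      (altn (rinter α β) (rinter α γ) ((2 ^ (q + 1) - 2 * q - 2) * n + 2)) := by
  obtain ⟨hj1, hp1, hp2, hjodd, hjeven, hjtop⟩ := hg
  -- basic facts about the relations
  have hβs : ∀ x y, β x y → β y x := fun x y h => hβ.symm h
  have hβt : ∀ x y z, β x y → β y z → β x z := fun _ _ _ h1 h2 => hβ.trans h1 h2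
  have hDs : ∀ x y, rinter α γ x y → rinter α γ y x := fun x y h => ⟨hα.symm h.1, hγ.symm h.2⟩
  have hDr : ∀ x, rinter α γ x x := fun x => ⟨hα.refl x, hγ.refl x⟩
  have hDt : ∀ x y z, rinter α γ x y → rinter α γ y z → rinter α γ x z :=
    fun _ _ _ h1 h2 => ⟨hα.trans h1.1 h2.1, hγ.trans h1.2 h2.2⟩
  have hRs : ∀ x y, rinter α β x y → rinter α β y x := fun x y h => ⟨hα.symm h.1, hβ.symm h.2⟩
  have hRt : ∀ x y z, rinter α β x y → rinter α β y z → rinter α β x z :=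
    fun _ _ _ h1 h2 => ⟨hα.trans h1.1 h2.1, hβ.trans h1.2 h2.2⟩
  rcases Nat.eq_zero_or_pos n with hn0 | hn
  · -- Mal'cev case : n = 0
    subst hn0
    have hpz : ∀ x z, p x x z = z := fun x z => (hp2 x z).trans (hjtop x x z)
    intro a b hab
    obtain ⟨haαb, hch⟩ := hab
    have perm : ∀ (S T : A → A → Prop), pres3 p S → pres3 p T →
        (∀ x y, S x y → S y x) → (∀ x, S x x) → (∀ x, T x x) →
        ∀ x u y, S x u → T u y → ∃ w, T x w ∧ S w y := by
      intro S T hpS hpT hSs hSr hTr x u y hxu huy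
      refine ⟨p x u y, ?_, ?_⟩
      · have h := hpT x u u x u y (hTr x) (hTr u) huy
        rwa [hp1 x u] at h
      · have h := hpS x u y x x y (hSr x) (hSs _ _ hxu) (hSr y)
        rwa [hpz x y] at h
    have hpD : pres3 p (rinter α γ) := fun a₁ a₂ a₃ b₁ b₂ b₃ h1 h2 h3 =>
      ⟨hpα _ _ _ _ _ _ h1.1 h2.1 h3.1, hpγ _ _ _ _ _ _ h1.2 h2.2 h3.2⟩
    have collapse : ∀ t : ℕ,
        (∀ x y, altn β (rinter α γ) t x y → ∃ u, β x u ∧ rinter α γ u y) ∧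
        (∀ x y, altn (rinter α γ) β t x y → ∃ u, rinter α γ x u ∧ β u y) := by
      intro t
      induction t with
      | zero =>
          constructor
          · intro x y h
            have : x = y := h
            subst this; exact ⟨x, hβ.refl x, hDr x⟩
          · intro x y h
            have : x = y := h
            subst this; exact ⟨x, hDr x, hβ.refl x⟩
      | succ t ih =>
          constructor
          · rintro x y ⟨z, hxz, hrest⟩
            obtain ⟨u, hzu, huy⟩ := ih.2 z y hrest
            obtain ⟨w, hzw, hwy⟩ :=
              perm (rinter α γ) β hpD hpβ hDs hDr hβ.refl z u y hzu huy
            exact ⟨w, hβ.trans hxz hzw, hwy⟩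
          · rintro x y ⟨z, hxz, hrest⟩
            obtain ⟨u, hzu, huy⟩ := ih.1 z y hrest
            obtain ⟨w, hzw, hwy⟩ :=
              perm β (rinter α γ) hpβ hpD hβs hβ.refl hDr z u y hzu huy
            exact ⟨w, hDt _ _ _ hxz hzw, hwy⟩
    obtain ⟨u, hau, hub⟩ := (collapse _).1 a b hch
    have hv1 : rinter α γ a (p a u b) := by
      constructor
      · have h := hpα a u u a u b (hα.refl a) (hα.refl u) hub.1
        rwa [hp1 a u] at h
      · have h := hpγ a u u a u b (hγ.refl a) (hγ.refl u) hub.2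
        rwa [hp1 a u] at h
    have hv2 : β (p a u b) b := by
      have h := hpβ a u b a a b (hβ.refl a) (hβs _ _ hau) (hβ.refl b)
      rwa [hpz a b] at h
    have hw1 : rinter α β a (p a (p a u b) b) := by
      constructor
      · have h := hpα a (p a u b) (p a u b) a (p a u b) b (hα.refl a) (hα.refl _)
          (hα.trans (hα.symm hv1.1) haαb)
        rwa [hp1 a (p a u b)] at h
      · have h := hpβ a (p a u b) (p a u b) a (p a u b) b (hβ.refl a) (hβ.refl _) hv2
        rwa [hp1 a (p a u b)] at h
    have hw2 : rinter α γ (p a (p a u b) b) b := by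
      constructor
      · have h := hpα a (p a u b) b a a b (hα.refl a) (hα.symm hv1.1) (hα.refl b)
        rwa [hpz a b] at h
      · have h := hpγ a (p a u b) b a a b (hγ.refl a) (hγ.symm hv1.2) (hγ.refl b)
        rwa [hpz a b] at h
    have e0 : (2 ^ (q + 1) - 2 * q - 2) * 0 + 2 = 2 := by simp
    rw [e0]
    exact ⟨p a (p a u b) b, hw1, b, hw2, rfl⟩
  · -- main case : 1 ≤ n
    have good : ∀ a e : A, α a e → ∀ i, 1 ≤ i → i ≤ n + 1 → ∀ x, α (j i a x e) a := by
      intro a e hae i h1 h2 x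
      have h3 : α (j i a x e) (j i a x a) :=
        hjα i h1 h2 a x e a x a (hα.refl a) (hα.refl x) (hα.symm hae)
      rwa [hj1 i h1 h2 a x] at h3
    -- the inductive step, with the induction hypothesis abstracted out
    have forward : ∀ (m K : ℕ), 1 ≤ m → m % 2 = 1 → K % 2 = 0 → 2 ≤ K →
        (∀ x y : A, α x y → altn β (rinter α γ) m x y →
          altn (rinter α β) (rinter α γ) K x y) →
        ∀ a e : A, α a e → altn β (rinter α γ) (2 * m + 1) a e →
        altn (rinter α γ) (rinter α β) (K + 2 * m * n) a e := by
      intro m K hm1 hmodd hKev hK2 IHyp a e hae hch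
      -- first point of the chain
      have e1 : 2 * m + 1 = 1 + 2 * m := by omega
      rw [e1] at hch
      obtain ⟨y1, hay1', _, hy1rest⟩ := altn_split 1 β (rinter α γ) (2 * m) a e hch
      have hay1 : β a y1 := altn_one' hay1'
      have hy1e : altn (rinter α γ) β (2 * m) y1 e := hy1rest rfl
      -- last point of the chain
      have e2 : 2 * m = (2 * m - 1) + 1 := by omega
      rw [e2] at hy1e
      obtain ⟨y2m, hmid, _, hlast⟩ := altn_split (2 * m - 1) (rinter α γ) β 1 y1 e hy1e
      have hy2me : β y2m e := altn_one' (hlast (by omega))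
      -- middle points of the chain
      rw [e1.symm.trans (by omega : 2 * m + 1 = m + (m + 1))] at hch
      obtain ⟨bb, hseg1, _, hseg1'⟩ := altn_split m β (rinter α γ) (m + 1) a e hch
      have hrest : altn (rinter α γ) β (m + 1) bb e := hseg1' hmodd
      rw [show m + 1 = 1 + m by omega] at hrest
      obtain ⟨cc, hbc', _, hcc1⟩ := altn_split 1 (rinter α γ) β m bb e hrest
      have hbc : rinter α γ bb cc := altn_one' hbc'
      have hce : altn β (rinter α γ) m cc e := hcc1 rfl
      -- the element P := p a bb cc, with (a, P) ∈ α∩γ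
      have hδaP : rinter α γ a (p a bb cc) := by
        constructor
        · have h := hpα a cc cc a bb cc (hα.refl a) (hα.symm hbc.1) (hα.refl cc)
          rwa [hp1 a cc] at h
        · have h := hpγ a cc cc a bb cc (hγ.refl a) (hγ.symm hbc.2) (hγ.refl cc)
          rwa [hp1 a cc] at h
      -- zip the two halves through p, reaching j 1 a a e
      have hrev1 : altn β (rinter α γ) m bb a :=
        (altn_rev m β (rinter α γ) hβs hDs a bb hseg1).2 hmodd
      have hzip : altn β (rinter α γ) m (p a bb cc) (p a a e) :=
        altn_zip m β (rinter α γ) β (rinter α γ) (fun u v => p a u v)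
          (fun x y u v hxy huv => hpβ a x u a y v (hβ.refl a) hxy huv)
          (fun x y u v hxy huv =>
            ⟨hpα a x u a y v (hα.refl a) hxy.1 huv.1, hpγ a x u a y v (hγ.refl a) hxy.2 huv.2⟩)
          bb a cc e hrev1 hce
      rw [hp2 a e] at hzip
      have hss2 : β (j 1 a a e) (j 1 a y1 e) :=
        hjβ 1 (by omega) (by omega) a a e a y1 e (hβ.refl a) hay1 (hβ.refl e)
      have em : (m - 1) + 1 = m := by omega
      have hPz : altn β (rinter α γ) m (p a bb cc) (j 1 a y1 e) := by
        rw [← em] at hzip ⊢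
        exact altn_merge (m - 1) β (rinter α γ) hβt hDt _ _ _ hzip
          (fun _ => hss2) (fun hp => absurd hp (by omega))
      -- apply the inner modularity hypothesis to (P, j 1 a y1 e)
      have hgood1 : α (j 1 a y1 e) a := good a e hae 1 (by omega) (by omega) y1
      have hαPs2 : α (p a bb cc) (j 1 a y1 e) :=
        hα.trans (hα.symm hδaP.1) (hα.symm hgood1)
      have hIHseg : altn (rinter α β) (rinter α γ) K (p a bb cc) (j 1 a y1 e) :=
        IHyp _ _ hαPs2 hPz
      -- the ladder through the Gumm operations j 1, ..., j (n+1)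
      have mapD : ∀ i, 1 ≤ i → i ≤ n + 1 → ∀ u v, rinter α γ u v →
          rinter α γ (j i a u e) (j i a v e) := fun i h1 h2 u v huv =>
        ⟨hjα i h1 h2 a u e a v e (hα.refl a) huv.1 (hα.refl e),
         hjγ i h1 h2 a u e a v e (hγ.refl a) huv.2 (hγ.refl e)⟩
      have mapB : ∀ i, 1 ≤ i → i ≤ n + 1 → ∀ u v, β u v →
          rinter α β (j i a u e) (j i a v e) := fun i h1 h2 u v huv =>
        ⟨hα.trans (good a e hae i h1 h2 u) (hα.symm (good a e hae i h1 h2 v)),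
         hjβ i h1 h2 a u e a v e (hβ.refl a) huv (hβ.refl e)⟩
      have hmidrev : altn (rinter α γ) β (2 * m - 1) y2m y1 :=
        (altn_rev (2 * m - 1) (rinter α γ) β hDs hβs y1 y2m hmid).2 (by omega)
      have midUp : ∀ i, 1 ≤ i → i ≤ n + 1 →
          altn (rinter α γ) (rinter α β) (2 * m - 1) (j i a y1 e) (j i a y2m e) :=
        fun i h1 h2 => altn_map (2 * m - 1) (rinter α γ) β (rinter α γ) (rinter α β)
          (fun x => j i a x e) (mapD i h1 h2) (mapB i h1 h2) y1 y2m hmid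
      have midDown : ∀ i, 1 ≤ i → i ≤ n + 1 →
          altn (rinter α γ) (rinter α β) (2 * m - 1) (j i a y2m e) (j i a y1 e) :=
        fun i h1 h2 => altn_map (2 * m - 1) (rinter α γ) β (rinter α γ) (rinter α β)
          (fun x => j i a x e) (mapD i h1 h2) (mapB i h1 h2) y2m y1 hmidrev
      have cOdd : ∀ i, 1 ≤ i → i ≤ n → i % 2 = 1 →
          rinter α β (j i a y2m e) (j (i + 1) a y2m e) := by
        intro i h1 h2 hodd
        have hb1 : β (j i a y2m e) (j i a e e) :=
          hjβ i h1 (by omega) a y2m e a e e (hβ.refl a) hy2me (hβ.refl e)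
        rw [hjodd i h1 h2 hodd a e] at hb1
        have hb2 : β (j (i + 1) a e e) (j (i + 1) a y2m e) :=
          hjβ (i + 1) (by omega) (by omega) a e e a y2m e (hβ.refl a) (hβs _ _ hy2me) (hβ.refl e)
        exact ⟨hα.trans (good a e hae i h1 (by omega) y2m)
            (hα.symm (good a e hae (i + 1) (by omega) (by omega) y2m)),
          hβt _ _ _ hb1 hb2⟩
      have cEven : ∀ i, 1 ≤ i → i ≤ n → i % 2 = 0 →
          rinter α β (j i a y1 e) (j (i + 1) a y1 e) := by
        intro i h1 h2 heven
        have hb1 : β (j i a y1 e) (j i a a e) :=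
          hjβ i h1 (by omega) a y1 e a a e (hβ.refl a) (hβs _ _ hay1) (hβ.refl e)
        rw [hjeven i h1 h2 heven a e] at hb1
        have hb2 : β (j (i + 1) a a e) (j (i + 1) a y1 e) :=
          hjβ (i + 1) (by omega) (by omega) a a e a y1 e (hβ.refl a) hay1 (hβ.refl e)
        exact ⟨hα.trans (good a e hae i h1 (by omega) y1)
            (hα.symm (good a e hae (i + 1) (by omega) (by omega) y1)),
          hβt _ _ _ hb1 hb2⟩
      have endOdd : n % 2 = 1 → rinter α β (j n a y2m e) e := by
        intro hodd
        have hb1 : β (j n a y2m e) (j n a e e) :=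
          hjβ n hn (by omega) a y2m e a e e (hβ.refl a) hy2me (hβ.refl e)
        rw [hjodd n hn (le_refl n) hodd a e, hjtop a e e] at hb1
        exact ⟨hα.trans (good a e hae n hn (by omega) y2m) hae, hb1⟩
      have endEven : n % 2 = 0 → rinter α β (j n a y1 e) e := by
        intro heven
        have hb1 : β (j n a y1 e) (j n a a e) :=
          hjβ n hn (by omega) a y1 e a a e (hβ.refl a) (hβs _ _ hay1) (hβ.refl e)
        rw [hjeven n hn (le_refl n) heven a e, hjtop a a e] at hb1
        exact ⟨hα.trans (good a e hae n hn (by omega) y1) hae, hb1⟩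
      have lad : ∀ KK : ℕ, ∀ i, 1 ≤ i → i + KK = n →
          (i % 2 = 1 →
            altn (rinter α γ) (rinter α β) (2 * m * (KK + 1)) (j i a y1 e) e) ∧
          (i % 2 = 0 →
            altn (rinter α γ) (rinter α β) (2 * m * (KK + 1)) (j i a y2m e) e) := by
        intro KK
        induction KK with
        | zero =>
            intro i h1 hi
            have hin : i = n := by omega
            subst hin
            constructor
            · intro hodd
              have hsn : altn (rinter α γ) (rinter α β) (2 * m - 1 + 1) (j i a y1 e) e :=
                altn_snoc (2 * m - 1) _ _ _ _ _ (midUp i h1 (by omega))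
                  (fun hp => absurd hp (by omega)) (fun _ => endOdd hodd)
              rwa [show 2 * m - 1 + 1 = 2 * m * (0 + 1) by omega] at hsn
            · intro heven
              have hsn : altn (rinter α γ) (rinter α β) (2 * m - 1 + 1) (j i a y2m e) e :=
                altn_snoc (2 * m - 1) _ _ _ _ _ (midDown i h1 (by omega))
                  (fun hp => absurd hp (by omega)) (fun _ => endEven heven)
              rwa [show 2 * m - 1 + 1 = 2 * m * (0 + 1) by omega] at hsn
        | succ KK ihlad =>
            intro i h1 hi
            have IHl := ihlad (i + 1) (by omega) (by omega)
            have ec : (2 * m - 1 + 1) + 2 * m * (KK + 1) = 2 * m * (KK + 1 + 1) := by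
              rw [show 2 * m - 1 + 1 = 2 * m by omega]; ring
            constructor
            · intro hodd
              have hsn : altn (rinter α γ) (rinter α β) (2 * m - 1 + 1)
                  (j i a y1 e) (j (i + 1) a y2m e) :=
                altn_snoc (2 * m - 1) _ _ _ _ _ (midUp i h1 (by omega))
                  (fun hp => absurd hp (by omega)) (fun _ => cOdd i h1 (by omega) hodd)
              have happ := altn_append (2 * m - 1 + 1) (rinter α γ) (rinter α β)
                  (2 * m * (KK + 1)) _ _ _ hsn
                  (fun _ => IHl.2 (by omega)) (fun hp => absurd hp (by omega))
              rwa [ec] at happ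
            · intro heven
              have hsn : altn (rinter α γ) (rinter α β) (2 * m - 1 + 1)
                  (j i a y2m e) (j (i + 1) a y1 e) :=
                altn_snoc (2 * m - 1) _ _ _ _ _ (midDown i h1 (by omega))
                  (fun hp => absurd hp (by omega)) (fun _ => cEven i h1 (by omega) heven)
              have happ := altn_append (2 * m - 1 + 1) (rinter α γ) (rinter α β)
                  (2 * m * (KK + 1)) _ _ _ hsn
                  (fun _ => IHl.1 (by omega)) (fun hp => absurd hp (by omega))
              rwa [ec] at happ
      have ladder : altn (rinter α γ) (rinter α β) (2 * m * n) (j 1 a y1 e) e := by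
        have h := (lad (n - 1) 1 (by omega) (by omega)).1 (by omega)
        rwa [show n - 1 + 1 = n by omega] at h
      -- assemble everything
      have hmn1 : 1 ≤ m * n := le_trans (by omega) (Nat.mul_le_mul hm1 hn)
      have h2mn : 2 * m * n = 2 * (m * n) := by ring
      rw [h2mn, show 2 * (m * n) = 1 + (2 * (m * n) - 1) by omega] at ladder
      obtain ⟨z, hz1, _, hztail'⟩ :=
        altn_split 1 (rinter α γ) (rinter α β) (2 * (m * n) - 1) _ e ladder
      have hδz : rinter α γ (j 1 a y1 e) z := altn_one' hz1
      have hztail : altn (rinter α β) (rinter α γ) (2 * (m * n) - 1) z e := hztail' rfl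
      have hIH2 : altn (rinter α β) (rinter α γ) K (p a bb cc) z := by
        have eK : (K - 1) + 1 = K := by omega
        rw [← eK] at hIHseg ⊢
        exact altn_merge (K - 1) _ _ hRt hDt _ _ _ hIHseg
          (fun hp => absurd hp (by omega)) (fun _ => hδz)
      have happ2 := altn_append K (rinter α β) (rinter α γ) (2 * (m * n) - 1) _ _ _ hIH2
        (fun _ => hztail) (fun hp => absurd hp (by omega))
      rw [h2mn, show K + 2 * (m * n) = (K + (2 * (m * n) - 1)) + 1 by omega]
      exact ⟨p a bb cc, hδaP, happ2⟩
    -- the induction on q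
    have main : ∀ t : ℕ, ∀ a b : A, α a b → altn β (rinter α γ) (2 ^ (t + 1) - 1) a b →
        altn (rinter α β) (rinter α γ) ((2 ^ (t + 2) - 2 * (t + 1) - 2) * n + 2) a b := by
      intro t
      induction t with
      | zero =>
          intro a b hab hch
          rw [show (2:ℕ) ^ (0 + 1) - 1 = 1 by norm_num] at hch
          have h1 : β a b := altn_one' hch
          rw [show (2 ^ (0 + 2) - 2 * (0 + 1) - 2) * n + 2 = 2 by norm_num]
          exact ⟨b, ⟨hab, h1⟩, b, hDr b, rfl⟩
      | succ t IH =>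
          intro a b hab hch
          have hp2t0 : (2:ℕ) ^ (t + 1) = 2 * 2 ^ t := by rw [pow_succ]; ring
          have hp2t1 : (2:ℕ) ^ (t + 2) = 2 * 2 ^ (t + 1) := by rw [pow_succ]; ring
          have hp2t2 : (2:ℕ) ^ (t + 3) = 2 * 2 ^ (t + 2) := by rw [pow_succ]; ring
          have hge1 : 1 ≤ (2:ℕ) ^ t := Nat.one_le_two_pow
          have hge : 2 ≤ (2:ℕ) ^ (t + 1) := by omega
          have hgt : t + 1 < 2 ^ (t + 1) := (t + 1).lt_two_pow_self
          have hm1 : 1 ≤ 2 ^ (t + 1) - 1 := by omega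
          have hmodd : (2 ^ (t + 1) - 1) % 2 = 1 := by omega
          obtain ⟨d, hd⟩ : ∃ d, 2 ^ (t + 2) - 2 * (t + 1) - 2 = 2 * d :=
            ⟨(2 ^ (t + 2) - 2 * (t + 1) - 2) / 2, by omega⟩
          have hKev : ((2 ^ (t + 2) - 2 * (t + 1) - 2) * n + 2) % 2 = 0 := by
            rw [hd, show 2 * d * n + 2 = 2 * (d * n + 1) by ring]
            omega
          have hch' : altn β (rinter α γ) (2 * (2 ^ (t + 1) - 1) + 1) a b := by
            rwa [show (2:ℕ) ^ (t + 1 + 1) - 1 = 2 * (2 ^ (t + 1) - 1) + 1 by omega] at hch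
          have hrev : altn β (rinter α γ) (2 * (2 ^ (t + 1) - 1) + 1) b a :=
            (altn_rev _ β (rinter α γ) hβs hDs _ _ hch').2 (by omega)
          have hf := forward (2 ^ (t + 1) - 1) ((2 ^ (t + 2) - 2 * (t + 1) - 2) * n + 2)
            hm1 hmodd hKev (by omega) (fun x y hxy hc => IH x y hxy hc)
            b a (hα.symm hab) hrev
          have hfev : (((2 ^ (t + 2) - 2 * (t + 1) - 2) * n + 2) +
              2 * (2 ^ (t + 1) - 1) * n) % 2 = 0 := by
            rw [show 2 * (2 ^ (t + 1) - 1) * n = 2 * ((2 ^ (t + 1) - 1) * n) by ring]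
            omega
          have hfin := (altn_rev _ (rinter α γ) (rinter α β) hDs hRs _ _ hf).1 hfev
          have ecount : (2 ^ (t + 3) - 2 * (t + 2) - 2) * n + 2 =
              ((2 ^ (t + 2) - 2 * (t + 1) - 2) * n + 2) + 2 * (2 ^ (t + 1) - 1) * n := by
            rw [show (2:ℕ) ^ (t + 3) - 2 * (t + 2) - 2 =
              (2 ^ (t + 2) - 2 * (t + 1) - 2) + 2 * (2 ^ (t + 1) - 1) by omega,
              add_mul, add_right_comm]
          rw [show t + 1 + 2 = t + 3 from rfl, show t + 1 + 1 = t + 2 from rfl, ecount]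
          exact hfin
    obtain ⟨q', rfl⟩ : ∃ q', q = q' + 1 := ⟨q - 1, by omega⟩
    intro a b hab
    obtain ⟨h1, h2⟩ := hab
    have := main q' a b h1 h2
    rwa [show q' + 1 + 1 = q' + 2 from rfl]
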